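/- For the reduced Dijkstra model with N = 2 agents, the configuration in which both agents are in state critical is unreachable from the initial configuration. -/

import Mathlib

/-- States of the reduced Dijkstra mutual-exclusion algorithm. -/
inductive DState : Type
  | initial | loopS | brk | critical | done
  deriving DecidableEq

/-- An agent's location: a state, or (`Sum.inr j`) executing the loop transition with
    pointer at agent `j`. -/
abbrev DLoc := DState ⊕ Fin 2

/-- A configuration of the 2-agent instance: for each agent its location and its
    boolean variable `b`. -/
abbrev Conf := Fin 2 → DLoc × Bool

open DState in
/-- The transition relation of the 2-agent instance of the reduced Dijkstra algorithm. -/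
inductive DStep : Conf → Conf → Prop
  | toLoop (C : Conf) (i : Fin 2) : (C i).1 = Sum.inl initial →
      DStep C (Function.update C i (Sum.inl loopS, true))
  | fromBrk (C : Conf) (i : Fin 2) : (C i).1 = Sum.inl brk →
      DStep C (Function.update C i (Sum.inl initial, false))
  | critToDone (C : Conf) (i : Fin 2) : (C i).1 = Sum.inl critical →
      DStep C (Function.update C i (Sum.inl done, (C i).2))
  | fromDone (C : Conf) (i : Fin 2) : (C i).1 = Sum.inl done →
      DStep C (Function.update C i (Sum.inl initial, false))
  | startIter (C : Conf) (i : Fin 2) : (C i).1 = Sum.inl loopS →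
      DStep C (Function.update C i (Sum.inr 0, (C i).2))
  | iterFail (C : Conf) (i j : Fin 2) : (C i).1 = Sum.inr j → j ≠ i → (C j).2 = true →
      DStep C (Function.update C i (Sum.inl brk, (C i).2))
  | iterAdvance (C : Conf) (i : Fin 2) : (C i).1 = Sum.inr 0 →
      ((0 : Fin 2) = i ∨ (C 0).2 = false) →
      DStep C (Function.update C i (Sum.inr 1, (C i).2))
  | iterSucceed (C : Conf) (i : Fin 2) : (C i).1 = Sum.inr 1 →
      ((1 : Fin 2) = i ∨ (C 1).2 = false) →
      DStep C (Function.update C i (Sum.inl critical, (C i).2))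

/-- The initial configuration: both agents in state `initial` with `b = false`. -/
def initConf : Conf := fun _ => (Sum.inl DState.initial, false)

open DState

def DInv (C : Conf) : Prop :=
  (∀ k, (C k).1 ≠ Sum.inl initial → (C k).1 ≠ Sum.inl brk → (C k).2 = true) ∧
  ¬((C 0).1 = Sum.inl critical ∧ ((C 1).1 = Sum.inr 1 ∨ (C 1).1 = Sum.inl critical))

lemma inv_init : DInv initConf := by
  constructor
  · intro k h _; exact absurd rfl h
  · simp [initConf]

lemma inv_step {C C' : Conf} (h : DInv C) (s : DStep C C') : DInv C' := by
  obtain ⟨hb, hm⟩ := h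
  cases s with
  | toLoop i hi =>
      refine ⟨?_, ?_⟩
      · intro k h1 h2
        by_cases hk : k = i
        · subst hk; simp [Function.update_self]
        · simp only [Function.update_of_ne hk] at *; exact hb k h1 h2
      · fin_cases i <;> simp_all [Function.update_apply]
  | fromBrk i hi =>
      refine ⟨?_, ?_⟩
      · intro k h1 h2
        by_cases hk : k = i
        · subst hk; simp [Function.update_self] at h1
        · simp only [Function.update_of_ne hk] at *; exact hb k h1 h2
      · fin_cases i <;> simp_all [Function.update_apply]
  | critToDone i hi =>
      refine ⟨?_, ?_⟩
      · intro k h1 h2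
        by_cases hk : k = i
        · subst hk; simp only [Function.update_self]
          exact hb k (by rw [hi]; simp) (by rw [hi]; simp)
        · simp only [Function.update_of_ne hk] at *; exact hb k h1 h2
      · fin_cases i <;> simp_all [Function.update_apply]
  | fromDone i hi =>
      refine ⟨?_, ?_⟩
      · intro k h1 h2
        by_cases hk : k = i
        · subst hk; simp [Function.update_self] at h1
        · simp only [Function.update_of_ne hk] at *; exact hb k h1 h2
      · fin_cases i <;> simp_all [Function.update_apply]
  | startIter i hi =>
      refine ⟨?_, ?_⟩
      · intro k h1 h2
        by_cases hk : k = i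
        · subst hk; simp only [Function.update_self]
          exact hb k (by rw [hi]; simp) (by rw [hi]; simp)
        · simp only [Function.update_of_ne hk] at *; exact hb k h1 h2
      · fin_cases i <;> simp_all [Function.update_apply]
  | iterFail i j hi hj hbj =>
      refine ⟨?_, ?_⟩
      · intro k h1 h2
        by_cases hk : k = i
        · subst hk; simp [Function.update_self] at h2
        · simp only [Function.update_of_ne hk] at *; exact hb k h1 h2
      · fin_cases i <;> simp_all [Function.update_apply]
  | iterAdvance i hi hg =>
      refine ⟨?_, ?_⟩
      · intro k h1 h2
        by_cases hk : k = i
        · subst hk; simp only [Function.update_self]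
          exact hb k (by rw [hi]; simp) (by rw [hi]; simp)
        · simp only [Function.update_of_ne hk] at *; exact hb k h1 h2
      · have hb0 := hb 0
        fin_cases i <;> simp_all [Function.update_apply]
        · intro hc
          have h0 := hb0 (by rw [hc]; simp)
          simp [hg, hc] at h0
  | iterSucceed i hi hg =>
      refine ⟨?_, ?_⟩
      · intro k h1 h2
        by_cases hk : k = i
        · subst hk; simp only [Function.update_self]
          exact hb k (by rw [hi]; simp) (by rw [hi]; simp)
        · simp only [Function.update_of_ne hk] at *; exact hb k h1 h2
      · have hb1 := hb 1
        fin_cases i <;> simp_all [Function.update_apply]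
        · constructor <;> intro hc <;>
            { have h1 := hb1 (by rw [hc]; simp)
              simp [hg, hc] at h1 }

lemma inv_reach : ∀ C : Conf, Relation.ReflTransGen DStep initConf C → DInv C := by
  intro C hreach
  induction hreach with
  | refl => exact inv_init
  | tail _ s ih => exact inv_step ih s

/-- in the 2-agent instance, no reachable configuration has both agents in
    state `critical`; in particular the configuration with both agents critical is
    unreachable. -/
theorem dijkstra2_mutual_exclusion :
    ∀ C : Conf, Relation.ReflTransGen DStep initConf C →
      ¬((C 0).1 = Sum.inl DState.critical ∧ (C 1).1 = Sum.inl DState.critical) := by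
  intro C hreach hcrit
  exact (inv_reach C hreach).2 ⟨hcrit.1, Or.inr hcrit.2⟩
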